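/- Let T > 0, let M : ℝ^n → (J × n real matrices) be continuous and suppose there is c > 0 with ‖M(x) y‖ ≥ c ‖y‖ for all x, y ∈ ℝ^n. Let Φ : [0,T] × ℝ^n → ℝ be continuous and bounded and let v ∈ ℝ^n. Then lim_{t → T⁻} (T−t)^{−n/2} ∫_{ℝ^n} Φ(t,q) exp(−‖M(q)(q−v)‖²/(2(T−t))) dq = Φ(T,v) ∫_{ℝ^n} exp(−‖M(v) y‖²/2) dy. -/

import Mathlib

open MeasureTheory Matrix

/-- The Euclidean norm of a vector in `ℝ^k`. -/
noncomputable def eucNorm {k : ℕ} (v : Fin k → ℝ) : ℝ :=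
  ‖(EuclideanSpace.equiv (Fin k) ℝ).symm v‖

lemma eucNorm_nonneg {k : ℕ} (v : Fin k → ℝ) : 0 ≤ eucNorm v := norm_nonneg _

lemma eucNorm_smul {k : ℕ} (r : ℝ) (v : Fin k → ℝ) : eucNorm (r • v) = |r| * eucNorm v := by
  unfold eucNorm
  rw [_root_.map_smul, norm_smul, Real.norm_eq_abs]

lemma eucNorm_continuous {k : ℕ} : Continuous (eucNorm (k := k)) :=
  ((EuclideanSpace.equiv (Fin k) ℝ).symm.continuous).norm

lemma eucNorm_sq {k : ℕ} (v : Fin k → ℝ) : eucNorm v ^ 2 = ∑ i, v i ^ 2 := by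
  unfold eucNorm
  rw [EuclideanSpace.norm_eq, Real.sq_sqrt (by positivity)]
  simp [Real.norm_eq_abs, sq_abs]

lemma gauss_integrable {k : ℕ} {b : ℝ} (hb : 0 < b) :
    Integrable (fun y : Fin k → ℝ => Real.exp (-b * eucNorm y ^ 2)) := by
  have h : ∀ y : Fin k → ℝ, Real.exp (-b * eucNorm y ^ 2) = ∏ i, Real.exp (-b * y i ^ 2) := by
    intro y
    rw [eucNorm_sq, ← Real.exp_sum]
    congr 1
    rw [Finset.mul_sum]
  simp_rw [h]
  exact Integrable.fintype_prod (fun _ => integrable_exp_neg_mul_sq hb)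


/-- The dominated-convergence core of the conditioning lemma: as `t → T⁻`,
`(T−t)^{−n/2} ∫ Φ(t,q) exp(−‖M(q)(q−v)‖²/(2(T−t))) dq → Φ(T,v) ∫ exp(−‖M(v) y‖²/2) dy`. -/
theorem gaussian_concentration_limit (n J : ℕ) (T : ℝ) (hT : 0 < T)
    (M : (Fin n → ℝ) → Matrix (Fin J) (Fin n) ℝ) (hM : Continuous M)
    (c : ℝ) (hc : 0 < c) (hMc : ∀ x y : Fin n → ℝ, c * eucNorm y ≤ eucNorm (M x *ᵥ y))
    (Φ : ℝ → (Fin n → ℝ) → ℝ)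
    (hΦcont : ContinuousOn (fun z : ℝ × (Fin n → ℝ) => Φ z.1 z.2)
      (Set.Icc 0 T ×ˢ Set.univ))
    (C : ℝ) (hΦbdd : ∀ t ∈ Set.Icc (0 : ℝ) T, ∀ q : Fin n → ℝ, |Φ t q| ≤ C)
    (v : Fin n → ℝ) :
    Filter.Tendsto
      (fun t : ℝ => (T - t) ^ (-(n : ℝ) / 2)
        * ∫ q : Fin n → ℝ,
            Φ t q * Real.exp (-eucNorm (M q *ᵥ (q - v)) ^ 2 / (2 * (T - t))))
      (nhdsWithin T (Set.Ioo 0 T))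
      (nhds (Φ T v * ∫ y : Fin n → ℝ, Real.exp (-eucNorm (M v *ᵥ y) ^ 2 / 2))) := by
  classical
  have hC : 0 ≤ C := (abs_nonneg _).trans (hΦbdd T ⟨hT.le, le_rfl⟩ v)
  set l := nhdsWithin T (Set.Ioo 0 T) with hl
  set g : ℝ → (Fin n → ℝ) → ℝ := fun t y =>
    Φ t (v + Real.sqrt (T - t) • y) *
      Real.exp (-eucNorm (M (v + Real.sqrt (T - t) • y) *ᵥ y) ^ 2 / 2) with hg
  -- Step A : change of variables
  have stepA : ∀ t ∈ Set.Ioo (0:ℝ) T,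
      (T - t) ^ (-(n : ℝ) / 2) * (∫ q : Fin n → ℝ,
        Φ t q * Real.exp (-eucNorm (M q *ᵥ (q - v)) ^ 2 / (2 * (T - t))))
      = ∫ y : Fin n → ℝ, g t y := by
    intro t ht
    have hs : 0 < T - t := sub_pos.2 ht.2
    set r := Real.sqrt (T - t) with hrdef
    have hr : 0 < r := Real.sqrt_pos.2 hs
    have hr2 : r ^ 2 = T - t := Real.sq_sqrt hs.le
    set f : (Fin n → ℝ) → ℝ := fun q =>
      Φ t q * Real.exp (-eucNorm (M q *ᵥ (q - v)) ^ 2 / (2 * (T - t))) with hf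
    have h1 : ∀ y : Fin n → ℝ, f (v + r • y) = g t y := by
      intro y
      have hsub : (v + r • y) - v = r • y := add_sub_cancel_left v (r • y)
      have heucNorm : eucNorm (M (v + r • y) *ᵥ (r • y)) = r * eucNorm (M (v + r • y) *ᵥ y) := by
        rw [Matrix.mulVec_smul, eucNorm_smul, abs_of_pos hr]
      show Φ t (v + r • y) *
          Real.exp (-eucNorm (M (v + r • y) *ᵥ ((v + r • y) - v)) ^ 2 / (2 * (T - t)))
        = Φ t (v + r • y) * Real.exp (-eucNorm (M (v + r • y) *ᵥ y) ^ 2 / 2)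
      rw [hsub, heucNorm, mul_pow, hr2]
      congr 1
      field_simp
    have h2 : ∫ y : Fin n → ℝ, f (v + r • y) = (r ^ n)⁻¹ * ∫ x : Fin n → ℝ, f (v + x) := by
      have := Measure.integral_comp_smul_of_nonneg
        (volume : Measure (Fin n → ℝ)) (fun x => f (v + x)) r (hR := hr.le)
      simpa [Module.finrank_fin_fun, smul_eq_mul] using this
    have h3 : ∫ x : Fin n → ℝ, f (v + x) = ∫ q : Fin n → ℝ, f q :=
      integral_add_left_eq_self f v
    have h4 : (T - t) ^ (-(n : ℝ) / 2) * r ^ n = 1 := by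
      have hrn : (r : ℝ) ^ n = (T - t) ^ ((n : ℝ) / 2) := by
        rw [hrdef, Real.sqrt_eq_rpow, ← Real.rpow_natCast ((T - t) ^ ((1:ℝ)/2)) n,
          ← Real.rpow_mul hs.le]
        norm_num
        congr 1
        ring
      rw [hrn, ← Real.rpow_add hs, neg_div, neg_add_cancel, Real.rpow_zero]
    have h5 : (T - t) ^ (-(n : ℝ) / 2) = (r ^ n)⁻¹ := by
      rw [inv_eq_one_div, eq_div_iff (pow_pos hr n).ne']
      exact h4
    rw [h5, ← h3, ← h2]
    exact integral_congr_ae (Filter.Eventually.of_forall h1)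
  -- dominating function
  set bound : (Fin n → ℝ) → ℝ := fun y => C * Real.exp (-(c ^ 2 / 2) * eucNorm y ^ 2)
    with hbound
  have bound_int : Integrable bound := (gauss_integrable (by positivity)).const_mul C
  have meas_ev : ∀ᶠ t in l, AEStronglyMeasurable (g t) volume := by
    filter_upwards [self_mem_nhdsWithin] with t ht
    have hmap : Continuous fun y : Fin n → ℝ => v + Real.sqrt (T - t) • y :=
      continuous_const.add (continuous_const_smul _)
    have hΦt : Continuous fun y : Fin n → ℝ => Φ t (v + Real.sqrt (T - t) • y) :=
      hΦcont.comp_continuous (continuous_const.prodMk hmap)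
        (fun y => ⟨⟨ht.1.le, ht.2.le⟩, trivial⟩)
    have hexp : Continuous fun y : Fin n → ℝ =>
        Real.exp (-eucNorm (M (v + Real.sqrt (T - t) • y) *ᵥ y) ^ 2 / 2) :=
      Real.continuous_exp.comp <| Continuous.div_const (Continuous.neg <|
        (eucNorm_continuous.comp ((hM.comp hmap).matrix_mulVec continuous_id)).pow 2) 2
    exact (hΦt.mul hexp).aestronglyMeasurable
  have bound_ev : ∀ᶠ t in l, ∀ᵐ y : Fin n → ℝ, ‖g t y‖ ≤ bound y := by
    filter_upwards [self_mem_nhdsWithin] with t ht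
    refine Filter.Eventually.of_forall fun y => ?_
    set q := v + Real.sqrt (T - t) • y with hq
    have h1 : |Φ t q| ≤ C := hΦbdd t ⟨ht.1.le, ht.2.le⟩ q
    have h2 : Real.exp (-eucNorm (M q *ᵥ y) ^ 2 / 2)
        ≤ Real.exp (-(c ^ 2 / 2) * eucNorm y ^ 2) := by
      apply Real.exp_le_exp.2
      have hsq : (c * eucNorm y) ^ 2 ≤ eucNorm (M q *ᵥ y) ^ 2 :=
        pow_le_pow_left₀ (mul_nonneg hc.le (eucNorm_nonneg y)) (hMc q y) 2
      rw [mul_pow] at hsq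
      nlinarith
    calc ‖g t y‖ = |Φ t q| * Real.exp (-eucNorm (M q *ᵥ y) ^ 2 / 2) := by
          rw [Real.norm_eq_abs, abs_mul, abs_of_pos (Real.exp_pos _)]
      _ ≤ C * Real.exp (-(c ^ 2 / 2) * eucNorm y ^ 2) :=
          mul_le_mul h1 h2 (Real.exp_pos _).le hC
  have h_lim : ∀ᵐ y : Fin n → ℝ, Filter.Tendsto (fun t => g t y) l
      (nhds (Φ T v * Real.exp (-eucNorm (M v *ᵥ y) ^ 2 / 2))) := by
    refine Filter.Eventually.of_forall fun y => ?_
    have hqcont : Continuous fun t : ℝ => v + Real.sqrt (T - t) • y :=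
      continuous_const.add ((Real.continuous_sqrt.comp
        (continuous_const.sub continuous_id)).smul continuous_const)
    have hq0 : Filter.Tendsto (fun t : ℝ => v + Real.sqrt (T - t) • y) l (nhds v) := by
      have := (hqcont.tendsto T).mono_left (nhdsWithin_le_nhds (s := Set.Ioo 0 T))
      simpa using this
    have hpair : Filter.Tendsto (fun t : ℝ => (t, v + Real.sqrt (T - t) • y)) l
        (nhdsWithin (T, v) (Set.Icc 0 T ×ˢ Set.univ)) := by
      rw [tendsto_nhdsWithin_iff]
      constructor
      · exact (Filter.tendsto_id.mono_right nhdsWithin_le_nhds).prodMk_nhds hq0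
      · filter_upwards [self_mem_nhdsWithin] with t ht
        exact ⟨⟨ht.1.le, ht.2.le⟩, trivial⟩
    have hΦlim : Filter.Tendsto (fun t : ℝ => Φ t (v + Real.sqrt (T - t) • y)) l
        (nhds (Φ T v)) :=
      Filter.Tendsto.comp (hΦcont (T, v) ⟨⟨hT.le, le_rfl⟩, trivial⟩) hpair
    have hexplim : Filter.Tendsto
        (fun t : ℝ => Real.exp (-eucNorm (M (v + Real.sqrt (T - t) • y) *ᵥ y) ^ 2 / 2)) l
        (nhds (Real.exp (-eucNorm (M v *ᵥ y) ^ 2 / 2))) := by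
      have hφ : Continuous fun q : Fin n → ℝ => Real.exp (-eucNorm (M q *ᵥ y) ^ 2 / 2) :=
        Real.continuous_exp.comp <| Continuous.div_const (Continuous.neg <|
          (eucNorm_continuous.comp (hM.matrix_mulVec continuous_const)).pow 2) 2
      exact (hφ.tendsto v).comp hq0
    exact hΦlim.mul hexplim
  have key := tendsto_integral_filter_of_dominated_convergence bound meas_ev bound_ev
    bound_int h_lim
  rw [MeasureTheory.integral_const_mul] at key
  refine key.congr' ?_
  filter_upwards [self_mem_nhdsWithin] with t ht
  exact (stepA t ht).symm
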